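/- Under the standing assumptions, for every θ ∈ ℝ^d, every 0 < λ < 1 and every ε_h ∈ (0,1/2], the taming error satisfies |h(θ) − h_λ(θ)|² ≤ 4 λ² (K_h + a)² (1 + |θ|^{2(l+1)(1+1/ε_h)}). -/

import Mathlib

open Real

set_option maxHeartbeats 1000000 in
theorem kTULA_taming_error
    {d : ℕ} (hd : 0 < d)
    (u : EuclideanSpace ℝ (Fin d) → ℝ) (hu : ContDiff ℝ 3 u)
    (h : EuclideanSpace ℝ (Fin d) → EuclideanSpace ℝ (Fin d))
    (H : EuclideanSpace ℝ (Fin d) →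
      EuclideanSpace ℝ (Fin d) →L[ℝ] EuclideanSpace ℝ (Fin d))
    (hgrad : ∀ θ, h θ = gradient u θ)
    (hHess : ∀ θ, H θ = fderiv ℝ (gradient u) θ)
    (L K_H K_h a b : ℝ)
    (hL : 0 < L) (hK_H : 0 < K_H) (hK_h : 0 < K_h) (ha : 0 < a) (hb : 0 < b)
    (l : ℕ) (hl : 1 ≤ l)
    (hH_lip : ∀ θ θ' : EuclideanSpace ℝ (Fin d),
      ‖H θ - H θ'‖ ≤ L * (1 + ‖θ‖ + ‖θ'‖) ^ (l - 1) * ‖θ - θ'‖)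
    (hH_bd : ∀ θ : EuclideanSpace ℝ (Fin d), ‖H θ‖ ≤ K_H * (1 + ‖θ‖ ^ l))
    (hh_bd : ∀ θ : EuclideanSpace ℝ (Fin d), ‖h θ‖ ≤ K_h * (1 + ‖θ‖ ^ (l + 1)))
    (hdiss : ∀ θ : EuclideanSpace ℝ (Fin d), a * ‖θ‖ ^ 2 - b ≤ (inner ℝ (h θ) θ : ℝ))
    (hlam : ℝ → ℝ → EuclideanSpace ℝ (Fin d) → EuclideanSpace ℝ (Fin d))
    (hlam_def : ∀ (lam eps : ℝ) (θ : EuclideanSpace ℝ (Fin d)),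
      hlam lam eps θ =
        a • θ + ((1 + lam * ‖θ‖ ^ (((l : ℝ) + 1) / eps)) ^ eps)⁻¹ • (h θ - a • θ)) :
    ∀ (θ : EuclideanSpace ℝ (Fin d)) (lam eps : ℝ),
      0 < lam → lam < 1 → 0 < eps → eps ≤ 1 / 2 →
      ‖h θ - hlam lam eps θ‖ ^ 2 ≤
        4 * lam ^ 2 * (K_h + a) ^ 2 *
          (1 + ‖θ‖ ^ (2 * ((l : ℝ) + 1) * (1 + 1 / eps))) := by
  intro θ lam eps hlam0 hlam1 heps0 heps2
  have hr0 : (0:ℝ) ≤ ‖θ‖ := norm_nonneg θ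
  set r : ℝ := ‖θ‖ with hrdef
  set p : ℝ := ((l : ℝ) + 1) / eps with hpdef
  have hp0 : 0 < p := by positivity
  set q : ℝ := p + ((l : ℝ) + 1) with hqdef
  have hq2 : 2 * ((l : ℝ) + 1) * (1 + 1 / eps) = 2 * q := by
    rw [hqdef, hpdef]; field_simp; ring
  set x : ℝ := lam * r ^ p with hxdef
  have hx0 : 0 ≤ x := by positivity
  have hbase : (1:ℝ) ≤ 1 + x := by linarith
  set t : ℝ := (1 + x) ^ eps with htdef
  have ht1 : (1:ℝ) ≤ t := Real.one_le_rpow hbase heps0.le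
  have ht0 : 0 < t := lt_of_lt_of_le one_pos ht1
  have htx : t ≤ 1 + x := by
    calc t = (1 + x) ^ eps := rfl
    _ ≤ (1 + x) ^ (1:ℝ) := Real.rpow_le_rpow_of_exponent_le hbase (by linarith)
    _ = 1 + x := Real.rpow_one _
  -- the difference factors
  have hdiff : h θ - hlam lam eps θ = (1 - t⁻¹) • (h θ - a • θ) := by
    rw [hlam_def]
    rw [sub_smul, one_smul]
    abel
  have hinv1 : t⁻¹ ≤ 1 := by
    rw [inv_le_one_iff₀]; right; exact ht1
  have hfac : 0 ≤ 1 - t⁻¹ := by linarith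
  have hfacx : 1 - t⁻¹ ≤ x := by
    have h1 : 1 - t⁻¹ = (t - 1) * t⁻¹ := by field_simp
    have h2 : (t - 1) * t⁻¹ ≤ (t - 1) * 1 :=
      mul_le_mul_of_nonneg_left hinv1 (by linarith)
    linarith
  -- bound on ‖h θ - a • θ‖
  have hrle : r ≤ 1 + r ^ (l + 1) := by
    rcases le_total r 1 with hr1 | hr1
    · have : (0:ℝ) ≤ r ^ (l + 1) := by positivity
      linarith
    · have : r ≤ r ^ (l + 1) := le_self_pow₀ hr1 (Nat.succ_ne_zero l)
      linarith
  have hnorm : ‖h θ - a • θ‖ ≤ (K_h + a) * (1 + r ^ (l + 1)) := by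
    calc ‖h θ - a • θ‖ ≤ ‖h θ‖ + ‖a • θ‖ := norm_sub_le _ _
    _ = ‖h θ‖ + a * r := by rw [norm_smul, Real.norm_eq_abs, abs_of_pos ha]
    _ ≤ K_h * (1 + r ^ (l + 1)) + a * (1 + r ^ (l + 1)) := by
        have := hh_bd θ
        have h2 : a * r ≤ a * (1 + r ^ (l + 1)) :=
          mul_le_mul_of_nonneg_left hrle ha.le
        linarith
    _ = (K_h + a) * (1 + r ^ (l + 1)) := by ring
  have hKa : (0:ℝ) < K_h + a := by linarith
  have hbig : ‖h θ - hlam lam eps θ‖ ≤ lam * (K_h + a) * (r ^ p * (1 + r ^ (l + 1))) := by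
    rw [hdiff, norm_smul, Real.norm_eq_abs, abs_of_nonneg hfac]
    calc (1 - t⁻¹) * ‖h θ - a • θ‖ ≤ x * ((K_h + a) * (1 + r ^ (l + 1))) :=
      mul_le_mul hfacx hnorm (norm_nonneg _) hx0
    _ = lam * (K_h + a) * (r ^ p * (1 + r ^ (l + 1))) := by rw [hxdef]; ring
  -- key polynomial bound
  have hkey : (r ^ p * (1 + r ^ (l + 1))) ^ 2 ≤ 4 * (1 + r ^ (2 * q)) := by
    rcases eq_or_lt_of_le hr0 with hrz | hrz
    · have hz : r ^ p = 0 := by rw [← hrz, Real.zero_rpow hp0.ne']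
      have hz2 : r ^ (2 * q) = 0 := by
        rw [← hrz, Real.zero_rpow]; positivity
      rw [hz, hz2]; norm_num
    · have hsplit : r ^ p * (1 + r ^ (l + 1)) = r ^ p + r ^ q := by
        have : r ^ (l + 1) = r ^ (((l : ℝ) + 1)) := by
          rw [← Real.rpow_natCast r (l + 1)]; push_cast; ring_nf
        rw [this, mul_add, mul_one, ← Real.rpow_add hrz, hqdef]
      have hAB : (r ^ p) ^ 2 ≤ 1 + (r ^ q) ^ 2 := by
        rcases le_total r 1 with hr1 | hr1
        · have hA1 : r ^ p ≤ 1 := Real.rpow_le_one hr0 hr1 hp0.le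
          nlinarith [Real.rpow_nonneg hr0 p, Real.rpow_nonneg hr0 q]
        · have : r ^ p ≤ r ^ q :=
            Real.rpow_le_rpow_of_exponent_le hr1 (by rw [hqdef]; push_cast; linarith)
          nlinarith [Real.rpow_nonneg hr0 p, Real.rpow_nonneg hr0 q]
      have hB2 : (r ^ q) ^ 2 = r ^ (2 * q) := by
        rw [mul_comm, Real.rpow_mul hr0, Real.rpow_two]
      rw [hsplit]
      nlinarith [sq_nonneg (r ^ p - r ^ q), Real.rpow_nonneg hr0 p,
        Real.rpow_nonneg hr0 q, hAB, hB2]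
  have hLHS0 : 0 ≤ ‖h θ - hlam lam eps θ‖ := norm_nonneg _
  have hRHS0 : 0 ≤ lam * (K_h + a) * (r ^ p * (1 + r ^ (l + 1))) := by positivity
  have hsq : ‖h θ - hlam lam eps θ‖ ^ 2 ≤
      (lam * (K_h + a)) ^ 2 * (r ^ p * (1 + r ^ (l + 1))) ^ 2 := by
    have := mul_self_le_mul_self hLHS0 hbig
    nlinarith [this]
  rw [hq2]
  calc ‖h θ - hlam lam eps θ‖ ^ 2
      ≤ (lam * (K_h + a)) ^ 2 * (r ^ p * (1 + r ^ (l + 1))) ^ 2 := hsq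
    _ ≤ (lam * (K_h + a)) ^ 2 * (4 * (1 + r ^ (2 * q))) := by
        apply mul_le_mul_of_nonneg_left hkey (by positivity)
    _ = 4 * lam ^ 2 * (K_h + a) ^ 2 * (1 + r ^ (2 * q)) := by ring
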